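/- Let Φ be the CDF of the standard normal distribution and Φ⁻¹ its inverse on (0,1). Then Φ⁻¹(γ) = √(2 log(1/(1−γ))) + o(1) as γ → 1⁻; that is, Φ⁻¹(γ) − √(2 log(1/(1−γ))) → 0 as γ → 1 from below. -/

import Mathlib

open Filter Real MeasureTheory Set

noncomputable def stdGaussianPDF (z : ℝ) : ℝ :=
  (Real.sqrt (2 * Real.pi))⁻¹ * Real.exp (-z ^ 2 / 2)

lemma pdf_eq (z : ℝ) : stdGaussianPDF z = (Real.sqrt (2*Real.pi))⁻¹ * Real.exp (-(1/2) * z^2) := by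
  unfold stdGaussianPDF; ring_nf

lemma pdf_pos (z : ℝ) : 0 < stdGaussianPDF z := by
  unfold stdGaussianPDF
  positivity

lemma pdf_integrable : Integrable stdGaussianPDF := by
  have : Integrable (fun z : ℝ => rexp (-(1/2) * z^2)) := integrable_exp_neg_mul_sq (by norm_num)
  have h2 := this.const_mul (Real.sqrt (2*Real.pi))⁻¹
  refine h2.congr (Eventually.of_forall fun z => ?_)
  rw [pdf_eq]

lemma pdf_total : ∫ z, stdGaussianPDF z = 1 := by
  have h := integral_gaussian (1/2 : ℝ)
  simp only [pdf_eq]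
  rw [MeasureTheory.integral_const_mul, h]
  rw [show (π / (1/2 : ℝ)) = 2 * π by ring]
  rw [inv_mul_cancel₀ (by positivity)]

noncomputable def stdGaussianCDF (z : ℝ) : ℝ :=
  ∫ t in Set.Iic z, stdGaussianPDF t

noncomputable def Qtail (z : ℝ) : ℝ := ∫ t in Set.Ioi z, stdGaussianPDF t

lemma cdf_add_tail (z : ℝ) : stdGaussianCDF z + Qtail z = 1 := by
  have h := MeasureTheory.integral_add_compl (μ := volume) (measurableSet_Iic (a := z)) pdf_integrable
  rw [show (Set.Iic z)ᶜ = Set.Ioi z from compl_Iic] at h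
  rw [stdGaussianCDF, Qtail, h, pdf_total]

lemma cdf_mono : Monotone stdGaussianCDF := by
  intro a b hab
  exact MeasureTheory.setIntegral_mono_set pdf_integrable.integrableOn
    (Eventually.of_forall fun z => (pdf_pos z).le)
    (HasSubset.Subset.eventuallyLE (Set.Iic_subset_Iic.2 hab))

lemma hasDeriv_negpdf (t : ℝ) : HasDerivAt (fun t => -stdGaussianPDF t) (t * stdGaussianPDF t) t := by
  have h : HasDerivAt (fun t : ℝ => -t^2/2) (-t) t := by
    have := (hasDerivAt_pow 2 t).neg.div_const 2
    exact this.congr_deriv (by ring)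
  have h2 := (h.exp.const_mul (Real.sqrt (2*Real.pi))⁻¹).neg
  exact h2.congr_deriv (by unfold stdGaussianPDF; ring)

lemma tmul_integrableOn (x : ℝ) : IntegrableOn (fun t => t * stdGaussianPDF t) (Set.Ioi x) := by
  have : Integrable (fun t : ℝ => t * rexp (-(1/2) * t^2)) := integrable_mul_exp_neg_mul_sq (by norm_num)
  have h2 := this.const_mul (Real.sqrt (2*Real.pi))⁻¹
  refine (h2.congr (Eventually.of_forall fun z => ?_)).integrableOn
  rw [pdf_eq]; ring

lemma integral_tmul (x : ℝ) : ∫ t in Set.Ioi x, t * stdGaussianPDF t = stdGaussianPDF x := by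
  have h := integral_Ioi_of_hasDerivAt_of_tendsto' (a := x) (m := 0)
      (fun t _ => hasDeriv_negpdf t) (tmul_integrableOn x) ?_
  · rw [h]; ring
  · have h1 : Tendsto (fun t : ℝ => t^2/2) atTop atTop :=
      (tendsto_pow_atTop two_ne_zero).atTop_div_const (by norm_num)
    have h2 : Tendsto (fun t : ℝ => -t^2/2) atTop atBot := by
      rw [show (fun t : ℝ => -t^2/2) = (fun t : ℝ => -(t^2/2)) from funext fun t => by ring]
      exact tendsto_neg_atBot_iff.mpr h1
    have h3 : Tendsto (fun t : ℝ => rexp (-t^2/2)) atTop (nhds 0) :=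
      Real.tendsto_exp_atBot.comp h2
    have h4 := (h3.const_mul (Real.sqrt (2*Real.pi))⁻¹).neg
    simpa [stdGaussianPDF] using h4

lemma mills_upper {x : ℝ} (hx : 0 < x) : Qtail x ≤ stdGaussianPDF x / x := by
  have hmono : Qtail x ≤ ∫ t in Set.Ioi x, x⁻¹ * (t * stdGaussianPDF t) := by
    apply MeasureTheory.setIntegral_mono_on pdf_integrable.integrableOn
      ((tmul_integrableOn x).const_mul x⁻¹) measurableSet_Ioi
    intro t ht
    have h1 : (1:ℝ) ≤ x⁻¹ * t := by
      rw [inv_mul_eq_div, le_div_iff₀ hx]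
      simpa using (le_of_lt ht)
    calc stdGaussianPDF t = 1 * stdGaussianPDF t := by ring
      _ ≤ (x⁻¹ * t) * stdGaussianPDF t := by
          exact mul_le_mul_of_nonneg_right h1 (pdf_pos t).le
      _ = x⁻¹ * (t * stdGaussianPDF t) := by ring
  rw [MeasureTheory.integral_const_mul, integral_tmul] at hmono
  rw [div_eq_inv_mul]
  exact hmono

lemma pdf_tendsto_zero : Tendsto stdGaussianPDF atTop (nhds 0) := by
  have h1 : Tendsto (fun t : ℝ => t^2/2) atTop atTop :=
    (tendsto_pow_atTop two_ne_zero).atTop_div_const (by norm_num)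
  have h2 : Tendsto (fun t : ℝ => -t^2/2) atTop atBot := by
    rw [show (fun t : ℝ => -t^2/2) = (fun t : ℝ => -(t^2/2)) from funext fun t => by ring]
    exact tendsto_neg_atBot_iff.mpr h1
  have h3 : Tendsto (fun t : ℝ => rexp (-t^2/2)) atTop (nhds 0) :=
    Real.tendsto_exp_atBot.comp h2
  have h4 := h3.const_mul (Real.sqrt (2*Real.pi))⁻¹
  rw [mul_zero] at h4
  exact h4.congr fun t => rfl

lemma hasDeriv_millsLower (t : ℝ) :
    HasDerivAt (fun t => -(t * stdGaussianPDF t / (t^2+1)))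
      (stdGaussianPDF t * (1 - 2/(t^2+1)^2)) t := by
  have hne : (t:ℝ)^2 + 1 ≠ 0 := by positivity
  have hu : HasDerivAt (fun t : ℝ => t / (t^2+1)) ((1-t^2)/(t^2+1)^2) t := by
    have h1 : HasDerivAt (fun t : ℝ => t) 1 t := hasDerivAt_id t
    have h2 : HasDerivAt (fun t : ℝ => t^2+1) (2*t) t := by
      simpa using (hasDerivAt_pow 2 t).add_const 1
    have := h1.div h2 hne
    exact this.congr_deriv (by ring)
  have he : HasDerivAt (fun t : ℝ => rexp (-t^2/2)) (rexp (-t^2/2) * (-t)) t := by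
    have h : HasDerivAt (fun t : ℝ => -t^2/2) (-t) t := by
      have := (hasDerivAt_pow 2 t).neg.div_const 2
      exact this.congr_deriv (by ring)
    exact h.exp
  have hprod := (hu.mul he).const_mul (Real.sqrt (2*Real.pi))⁻¹ |>.neg
  have hs : Real.sqrt (2*Real.pi) ≠ 0 := by positivity
  refine (hprod.congr_of_eventuallyEq (Eventually.of_forall fun z => ?_)).congr_deriv ?_
  · simp only [Pi.neg_apply, Pi.mul_apply, stdGaussianPDF]; ring
  · unfold stdGaussianPDF; field_simp; ring

lemma millsLowerDeriv_int (x : ℝ) :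
    IntegrableOn (fun t => stdGaussianPDF t * (1 - 2/(t^2+1)^2)) (Set.Ioi x) := by
  apply Integrable.mono pdf_integrable.integrableOn
  · apply Continuous.aestronglyMeasurable
    have hc : Continuous stdGaussianPDF := by
      unfold stdGaussianPDF
      exact continuous_const.mul (Real.continuous_exp.comp (by continuity))
    exact hc.mul (continuous_const.sub (continuous_const.div (by continuity)
      (fun t => by positivity)))
  · refine Eventually.of_forall fun t => ?_
    have h1 : 0 < (t:ℝ)^2+1 := by positivity
    have h2 : (0:ℝ) ≤ 2/(t^2+1)^2 := by positivity
    have h3 : 2/((t:ℝ)^2+1)^2 ≤ 2 := by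
      rw [div_le_iff₀ (by positivity)]
      nlinarith [sq_nonneg t, sq_nonneg (t^2+1)]
    rw [Real.norm_eq_abs, Real.norm_eq_abs, abs_mul, abs_of_pos (pdf_pos t)]
    have : |1 - 2/((t:ℝ)^2+1)^2| ≤ 1 := abs_le.2 ⟨by linarith, by linarith⟩
    nlinarith [pdf_pos t, abs_nonneg (1 - 2/((t:ℝ)^2+1)^2)]

lemma mills_lower (x : ℝ) : x * stdGaussianPDF x / (x^2+1) ≤ Qtail x := by
  have hFTC : ∫ t in Set.Ioi x, stdGaussianPDF t * (1 - 2/(t^2+1)^2)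
      = x * stdGaussianPDF x / (x^2+1) := by
    have h := integral_Ioi_of_hasDerivAt_of_tendsto' (a := x) (m := 0)
        (fun t _ => hasDeriv_millsLower t) (millsLowerDeriv_int x) ?_
    · rw [h]; ring
    · refine squeeze_zero_norm (fun t => ?_) pdf_tendsto_zero
      have h1 : 0 < (t:ℝ)^2+1 := by positivity
      rw [Real.norm_eq_abs, abs_neg, abs_div, abs_mul, abs_of_pos (pdf_pos t), abs_of_pos h1]
      rw [div_le_iff₀ h1]
      have : |t| ≤ t^2+1 := by nlinarith [sq_abs t, sq_nonneg (|t| - 1)]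
      nlinarith [pdf_pos t, abs_nonneg t]
  rw [← hFTC]
  apply MeasureTheory.setIntegral_mono_on (millsLowerDeriv_int x)
    pdf_integrable.integrableOn measurableSet_Ioi
  intro t _
  have h2 : (0:ℝ) ≤ 2/(t^2+1)^2 := by positivity
  nlinarith [pdf_pos t]

lemma sqrt_tendsto_atTop : Tendsto Real.sqrt atTop atTop := by
  rw [tendsto_atTop_atTop]
  intro b
  refine ⟨b^2, fun x hx => ?_⟩
  calc b ≤ |b| := le_abs_self b
    _ = Real.sqrt (b^2) := (Real.sqrt_sq_eq_abs b).symm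
    _ ≤ Real.sqrt x := Real.sqrt_le_sqrt hx

set_option maxHeartbeats 1000000 in
theorem gaussian_quantile_asymptotics (Φinv : ℝ → ℝ)
    (hinv : ∀ γ ∈ Set.Ioo (0 : ℝ) 1, stdGaussianCDF (Φinv γ) = γ) :
    Tendsto (fun γ => Φinv γ - Real.sqrt (2 * Real.log (1 / (1 - γ))))
      (nhdsWithin 1 (Set.Ioo (0 : ℝ) 1)) (nhds 0) := by
  set l := nhdsWithin (1:ℝ) (Set.Ioo (0:ℝ) 1) with hl
  have h0 : Tendsto (fun γ : ℝ => 1 - γ) l (nhdsWithin 0 (Set.Ioi 0)) := by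
    apply tendsto_nhdsWithin_of_tendsto_nhds_of_eventually_within
    · have hc : Tendsto (fun γ : ℝ => 1 - γ) (nhds 1) (nhds (1 - 1)) :=
        (continuous_const.sub continuous_id).tendsto 1
      simpa using hc.mono_left nhdsWithin_le_nhds
    · exact eventually_mem_nhdsWithin.mono fun γ hγ => by
        simp only [Set.mem_Ioi, sub_pos]; exact hγ.2
  have h1 : Tendsto (fun γ : ℝ => 1/(1-γ)) l atTop := by
    simpa [one_div, Function.comp_def] using tendsto_inv_nhdsGT_zero.comp h0
  have h2 : Tendsto (fun γ : ℝ => Real.log (1/(1-γ))) l atTop :=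
    Real.tendsto_log_atTop.comp h1
  have h3 : Tendsto (fun γ : ℝ => Real.sqrt (2 * Real.log (1/(1-γ)))) l atTop :=
    sqrt_tendsto_atTop.comp (h2.const_mul_atTop two_pos)
  rw [NormedAddCommGroup.tendsto_nhds_zero]
  intro ε hε
  set c := Real.sqrt (2 * Real.pi) with hc
  have hc1 : (1:ℝ) ≤ c := by
    rw [hc, Real.one_le_sqrt]
    nlinarith [Real.pi_gt_three]
  have hc3 : c ≤ 3 := by
    rw [hc, show (3:ℝ) = Real.sqrt 9 by
      rw [show (9:ℝ) = 3^2 by norm_num, Real.sqrt_sq (by norm_num)]]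
    apply Real.sqrt_le_sqrt
    nlinarith [Real.pi_le_four]
  have hc0 : 0 < c := lt_of_lt_of_le one_pos hc1
  set K := rexp (ε^2/2) with hK
  have hK0 : 0 < K := Real.exp_pos _
  filter_upwards [eventually_mem_nhdsWithin,
    h3.eventually_ge_atTop (1 + ε + 24*K/ε^2)] with γ hγ hT
  set L := Real.log (1/(1-γ)) with hLdef
  set g := Real.sqrt (2*L) with hg
  have h1γ : 0 < 1 - γ := by linarith [hγ.2]
  have hg1 : 1 + ε ≤ g := by
    have : 0 < 24*K/ε^2 := by positivity
    linarith
  have hg0 : 0 < g := by linarith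
  have hL0 : 0 < 2*L := by
    by_contra h
    push_neg at h
    have hz : g = 0 := by rw [hg]; exact Real.sqrt_eq_zero_of_nonpos h
    rw [hz] at hg1
    linarith
  have hg2 : g^2 = 2*L := Real.sq_sqrt hL0.le
  have hexpL : rexp (-L) = 1 - γ := by
    rw [hLdef, one_div, Real.log_inv, neg_neg, Real.exp_log h1γ]
  clear_value c K L g
  -- Upper bound part: Φinv γ < g + ε
  have hupper : Φinv γ < g + ε := by
    obtain ⟨x, hx⟩ : ∃ x : ℝ, x = g + ε := ⟨_, rfl⟩
    rw [← hx]
    have hx1 : 1 ≤ x := by rw [hx]; linarith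
    have hx0 : 0 < x := by linarith
    have hQx : Qtail x < 1 - γ := by
      have hmills := mills_upper hx0
      have hexp : rexp (-x^2/2) = rexp (-L) * rexp (-(ε*g + ε^2/2)) := by
        rw [← Real.exp_add]
        congr 1
        rw [hx]
        linear_combination (-1/2 : ℝ) * hg2
      have hrw : stdGaussianPDF x / x = rexp (-L) * (rexp (-(ε*g + ε^2/2)) / (c * x)) := by
        unfold stdGaussianPDF
        rw [← hc, hexp]
        field_simp
        try ring
      rw [← hexpL]
      apply lt_of_le_of_lt hmills
      rw [hrw]
      have hr1 : rexp (-(ε*g + ε^2/2)) < 1 := by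
        rw [Real.exp_lt_one_iff]
        nlinarith
      have hcx : 1 ≤ c * x := by nlinarith
      calc rexp (-L) * (rexp (-(ε*g + ε^2/2)) / (c * x))
          ≤ rexp (-L) * rexp (-(ε*g + ε^2/2)) := by
            apply mul_le_mul_of_nonneg_left _ (Real.exp_pos _).le
            exact div_le_self (Real.exp_pos _).le hcx
        _ < rexp (-L) * 1 := by
            exact mul_lt_mul_of_pos_left hr1 (Real.exp_pos _)
        _ = rexp (-L) := mul_one _
    by_contra h
    push_neg at h
    have hmono := cdf_mono h
    rw [hinv γ hγ] at hmono
    have hcx := cdf_add_tail x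
    linarith
  -- Lower bound part: g - ε < Φinv γ
  have hlower : g - ε < Φinv γ := by
    obtain ⟨y, hy⟩ : ∃ y : ℝ, y = g - ε := ⟨_, rfl⟩
    rw [← hy]
    have hy1 : 1 ≤ y := by rw [hy]; linarith
    have hyg : y ≤ g := by rw [hy]; linarith
    have hQy : 1 - γ < Qtail y := by
      have hmills := mills_lower y
      obtain ⟨A, hA⟩ : ∃ A : ℝ, A = rexp (ε*g) := ⟨_, rfl⟩
      have hA4 : ε^2*g^2/4 ≤ A := by
        have h5 : ε*g/2 + 1 ≤ rexp (ε*g/2) := Real.add_one_le_exp _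
        have h6 : 0 ≤ ε*g/2 := by positivity
        have h7 : rexp (ε*g/2) * rexp (ε*g/2) = A := by
          rw [hA, ← Real.exp_add]; ring_nf
        nlinarith [Real.exp_pos (ε*g/2)]
      have hexp : rexp (-y^2/2) = rexp (-L) * A / K := by
        rw [hK, hA, eq_div_iff (Real.exp_pos _).ne', ← Real.exp_add, ← Real.exp_add]
        congr 1
        rw [hy]
        linear_combination (-1/2 : ℝ) * hg2
      have hrw : y * stdGaussianPDF y / (y^2+1)
          = rexp (-L) * (A * y) / (c * K * (y^2+1)) := by
        unfold stdGaussianPDF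
        rw [← hc, hexp]
        field_simp
        try ring
      rw [← hexpL]
      apply lt_of_lt_of_le _ hmills
      rw [hrw, lt_div_iff₀ (by positivity)]
      have key : c * K * (y^2+1) < A * y := by
        have h8 : 24*K < ε^2 * g := by
          have h9 : 0 < ε^2 := by positivity
          have h10 : 24*K/ε^2 < g := by linarith
          calc 24*K = (24*K/ε^2)*ε^2 := by field_simp
            _ < g*ε^2 := mul_lt_mul_of_pos_right h10 h9
            _ = ε^2*g := by ring
        have hg0' : 0 < g := by linarith
        have hy0 : 0 < y := by linarith
        have e1 : ε^2*g^2/4 * y ≤ A*y := mul_le_mul_of_nonneg_right hA4 hy0.le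
        have e2 : 6*K*g*y < ε^2*g^2/4*y := by nlinarith [mul_pos hg0' hy0]
        have e3 : 6*K*y*y ≤ 6*K*g*y := by nlinarith [mul_nonneg (mul_nonneg (by linarith : (0:ℝ) ≤ g - y) hy0.le) hK0.le]
        have e4 : 3*K*(y^2+1) ≤ 6*K*y*y := by nlinarith [mul_nonneg hK0.le (by nlinarith : (0:ℝ) ≤ y^2 - 1)]
        have e5 : c*K*(y^2+1) ≤ 3*K*(y^2+1) := by nlinarith
        linarith
      exact mul_lt_mul_of_pos_left key (Real.exp_pos _)
    by_contra h
    push_neg at h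
    have hmono := cdf_mono h
    rw [hinv γ hγ] at hmono
    have hcy := cdf_add_tail y
    linarith
  rw [Real.norm_eq_abs, abs_lt]
  constructor <;> [linarith; linarith]
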